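/- Let p be a prime and let A be an m×m matrix over the field 𝔽_p = ℤ/pℤ such that A has finite multiplicative order k (i.e., k is the least positive integer with A^k = I; in particular A is invertible). Then there exists a vector v ∈ 𝔽_p^m whose minimal period under the map v ↦ Av is exactly k: A^k v = v and A^ℓ v ≠ v for every 1 ≤ ℓ < k. Equivalently, the move graph of A over ℤ/pℤ contains a directed cycle of length exactly k. -/

import Mathlib

open Polynomial DirectSum

/-- Key lemma: for a linear endomorphism `φ` of `K^m` annihilated by a nonzero polynomial,
there is a vector whose polynomial annihilator annihilates the whole module. -/
lemma exists_max_order_vector {K : Type} [Field K] {m : ℕ}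
    (φ : (Fin m → K) →ₗ[K] (Fin m → K)) {P : K[X]} (hP : Polynomial.aeval φ P = 0)
    (hP0 : P ≠ 0) :
    ∃ v : Fin m → K, ∀ g : K[X], (Polynomial.aeval φ g) v = 0 →
      ∀ w : Fin m → K, (Polynomial.aeval φ g) w = 0 := by
  classical
  have hT : Module.IsTorsion K[X] (Module.AEval' φ) :=
    Module.AEval.isTorsion_of_aeval_eq_zero hP hP0
  obtain ⟨ι, hι, q, hq, e, ⟨ψ⟩⟩ := Module.equiv_directSum_of_isTorsion hT
  let x₀ : ⨁ i : ι, K[X] ⧸ (K[X] ∙ q i ^ e i) :=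
    ∑ i : ι, DirectSum.of (fun i : ι => K[X] ⧸ (K[X] ∙ q i ^ e i)) i
      (Submodule.Quotient.mk 1)
  refine ⟨(Module.AEval'.of φ).symm (ψ.symm x₀), fun g hg w => ?_⟩
  -- first: `g • x₀ = 0` in the direct sum
  have hsm0 : g • ψ.symm x₀ = 0 := by
    apply (Module.AEval'.of φ).symm.injective
    rw [map_zero, Module.AEval.of_symm_smul]
    exact hg
  have hx0 : g • x₀ = 0 := by
    have := congrArg ψ hsm0
    rwa [map_smul, LinearEquiv.apply_symm_apply, map_zero] at this
  -- hence each `q i ^ e i` divides `g`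
  have hdvd : ∀ i, q i ^ e i ∣ g := by
    intro i
    have h1 : (g • x₀) i = g • (x₀ i) := DFinsupp.smul_apply g x₀ i
    have h2 : x₀ i = Submodule.Quotient.mk 1 := by
      show (∑ j : ι, DirectSum.of (fun i : ι => K[X] ⧸ (K[X] ∙ q i ^ e i)) j
        (Submodule.Quotient.mk 1)) i = Submodule.Quotient.mk 1
      rw [DFinsupp.finset_sum_apply]
      have hs : ∑ a : ι, (DirectSum.of (fun i : ι => K[X] ⧸ (K[X] ∙ q i ^ e i)) a
          (Submodule.Quotient.mk 1)) i
          = (DirectSum.of (fun i : ι => K[X] ⧸ (K[X] ∙ q i ^ e i)) i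
            (Submodule.Quotient.mk 1)) i :=
        Finset.sum_eq_single_of_mem i (Finset.mem_univ i)
          (fun j _ hji => DirectSum.of_eq_of_ne _ _ _ hji.symm)
      rw [hs, DirectSum.of_eq_same]
    rw [hx0, h2] at h1
    have h3 : (Submodule.Quotient.mk (g • (1 : K[X])) :
        K[X] ⧸ (K[X] ∙ q i ^ e i)) = 0 := by
      rw [Submodule.Quotient.mk_smul]
      exact h1.symm
    rw [Submodule.Quotient.mk_eq_zero] at h3
    obtain ⟨a, ha⟩ := Submodule.mem_span_singleton.mp h3
    refine ⟨a, ?_⟩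
    have ha' : a * q i ^ e i = g * 1 := ha
    rw [mul_one] at ha'
    rw [← ha', mul_comm]
  -- hence `g` kills every element of the direct sum
  have hall : ∀ y : ⨁ i : ι, K[X] ⧸ (K[X] ∙ q i ^ e i), g • y = 0 := by
    intro y
    apply DFunLike.ext
    intro i
    rw [DFinsupp.smul_apply, DFinsupp.zero_apply]
    obtain ⟨r, hr⟩ := Submodule.Quotient.mk_surjective _ (y i)
    rw [← hr, ← Submodule.Quotient.mk_smul, Submodule.Quotient.mk_eq_zero]
    obtain ⟨a, ha⟩ := hdvd i
    exact Submodule.mem_span_singleton.mpr ⟨r * a, by rw [smul_eq_mul, smul_eq_mul, ha]; ring⟩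
  -- conclude for an arbitrary vector `w`
  have h4 : g • (Module.AEval'.of φ w) = 0 := by
    apply ψ.injective
    rw [map_smul, map_zero]
    exact hall _
  have h5 := congrArg (Module.AEval'.of φ).symm h4
  rwa [Module.AEval.of_symm_smul, map_zero, LinearEquiv.symm_apply_apply,
    Module.End.smul_def] at h5

/-- if `A` is an `m×m` matrix over `𝔽_p` of finite multiplicative order `k`,
then some vector `v ∈ 𝔽_p^m` has minimal period exactly `k` under `v ↦ Av`; i.e. the move
graph of `A` over `ℤ/pℤ` contains a directed cycle of length exactly `k`. -/
theorem stmt5 (m p k : ℕ) (hp : p.Prime) (A : Matrix (Fin m) (Fin m) (ZMod p))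
    (hk : 0 < k) (hAk : A ^ k = 1) (hmin : ∀ j, 0 < j → A ^ j = 1 → k ≤ j) :
    ∃ v : Fin m → ZMod p,
      (A ^ k).mulVec v = v ∧ ∀ ℓ, 0 < ℓ → ℓ < k → (A ^ ℓ).mulVec v ≠ v := by
  haveI : Fact p.Prime := ⟨hp⟩
  let φ : (Fin m → ZMod p) →ₗ[ZMod p] (Fin m → ZMod p) := Matrix.toLinAlgEquiv' A
  have hφpow : ∀ ℓ : ℕ, ∀ w : Fin m → ZMod p, (φ ^ ℓ) w = (A ^ ℓ).mulVec w := by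
    intro ℓ w
    have : φ ^ ℓ = Matrix.toLinAlgEquiv' (A ^ ℓ) := by
      show (Matrix.toLinAlgEquiv' A) ^ ℓ = _
      rw [map_pow]
    rw [this, Matrix.toLinAlgEquiv'_apply]
  have hP : Polynomial.aeval φ ((X : (ZMod p)[X]) ^ k - 1) = 0 := by
    rw [map_sub, map_one, aeval_X_pow]
    apply LinearMap.ext
    intro w
    rw [LinearMap.sub_apply, Module.End.one_apply, hφpow, hAk, Matrix.one_mulVec,
      sub_self, LinearMap.zero_apply]
  have hP0 : ((X : (ZMod p)[X]) ^ k - 1) ≠ 0 := by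
    simpa using X_pow_sub_C_ne_zero hk (1 : ZMod p)
  obtain ⟨v, hv⟩ := exists_max_order_vector φ hP hP0
  refine ⟨v, by rw [hAk, Matrix.one_mulVec], fun ℓ hl hlk hcon => ?_⟩
  have h1 : (Polynomial.aeval φ ((X : (ZMod p)[X]) ^ ℓ - 1)) v = 0 := by
    rw [map_sub, map_one, aeval_X_pow, LinearMap.sub_apply, Module.End.one_apply, hφpow,
      hcon, sub_self]
  have h2 := hv _ h1
  have hA : A ^ ℓ = 1 := by
    apply Matrix.toLinAlgEquiv'.injective
    apply LinearMap.ext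
    intro w
    have h2w := h2 w
    rw [map_sub, map_one, aeval_X_pow, LinearMap.sub_apply, Module.End.one_apply] at h2w
    have h3 : (φ ^ ℓ) w = w := sub_eq_zero.mp h2w
    rw [Matrix.toLinAlgEquiv'_apply, map_one, Module.End.one_apply, ← hφpow ℓ w, h3]
  exact absurd (hmin ℓ hl hA) (not_le.mpr hlk)
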